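/- The average effective resistance of the square two-dimensional toroidal grid satisfies R_ave(T_{M²}) ~ (1/(2π))·log M as M → ∞; that is, lim_{M→∞} R_ave(T_{M,M}) / log M = 1/(2π), where log denotes the natural logarithm. -/

import Mathlib

open Real Finset

/-- Average effective resistance of the two-dimensional toroidal grid `T_{M1,M2}`. -/
noncomputable def Rave2 (M1 M2 : ℕ) : ℝ :=
  (1 / ((M1 : ℝ) * M2)) * ∑ i ∈ Finset.range M1, ∑ j ∈ Finset.range M2,
    if i = 0 ∧ j = 0 then 0
    else 1 / (4 - 2 * Real.cos (2 * Real.pi * i / M1) - 2 * Real.cos (2 * Real.pi * j / M2))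

/-! ### Elementary trigonometric bounds -/

lemma my_sin_le {t : ℝ} (ht : 0 ≤ t) : Real.sin t ≤ t := by
  rcases eq_or_lt_of_le ht with h | h
  · simp [← h]
  · exact (Real.sin_lt h).le

lemma my_sin_ge {t : ℝ} (ht : 0 ≤ t) : t - t ^ 3 / 6 ≤ Real.sin t := by
  have hmono : MonotoneOn (fun t => Real.sin t - t + t ^ 3 / 6) (Set.Ici (0:ℝ)) := by
    have hder : ∀ x : ℝ, HasDerivAt (fun t => Real.sin t - t + t ^ 3 / 6)
        (Real.cos x - 1 + x ^ 2 / 2) x := by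
      intro x
      have h1 := ((Real.hasDerivAt_sin x).sub (hasDerivAt_id x)).add
        ((hasDerivAt_pow 3 x).div_const 6)
      refine h1.congr_deriv ?_
      norm_num
      ring
    apply monotoneOn_of_deriv_nonneg (convex_Ici 0)
    · exact (Continuous.continuousOn (by continuity))
    · intro x _
      exact (hder x).differentiableAt.differentiableWithinAt
    · intro x _
      rw [(hder x).deriv]
      nlinarith [Real.one_sub_sq_div_two_le_cos (x := x)]
  have h0 : (fun t => Real.sin t - t + t ^ 3 / 6) 0 ≤ (fun t => Real.sin t - t + t ^ 3 / 6) t :=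
    hmono (Set.self_mem_Ici) (Set.mem_Ici.2 ht) ht
  simp at h0
  linarith

lemma two_sub_two_cos (x : ℝ) : 2 - 2 * Real.cos x = 4 * Real.sin (x / 2) ^ 2 := by
  have := Real.sin_sq_eq_half_sub (x / 2)
  have h2 : 2 * (x / 2) = x := by ring
  rw [h2] at this
  linarith

lemma cos_upper {x : ℝ} : 2 - 2 * Real.cos x ≤ x ^ 2 := by
  nlinarith [Real.one_sub_sq_div_two_le_cos (x := x)]

lemma cos_lower {x : ℝ} (h0 : 0 ≤ x) (h1 : x ≤ π) :
    4 / π ^ 2 * x ^ 2 ≤ 2 - 2 * Real.cos x := by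
  rw [two_sub_two_cos]
  have h : 2 / π * (x / 2) ≤ Real.sin (x / 2) :=
    Real.mul_le_sin (by linarith) (by linarith)
  have hπ := Real.pi_pos
  have hs : 0 ≤ Real.sin (x / 2) := le_trans (by positivity) h
  have hx2 : x ≤ π * Real.sin (x / 2) := by
    have h2 := mul_le_mul_of_nonneg_left h (le_of_lt hπ)
    calc x = π * (2 / π * (x / 2)) := by field_simp
    _ ≤ π * Real.sin (x / 2) := h2
  have hxx : x ^ 2 ≤ π ^ 2 * Real.sin (x / 2) ^ 2 := by nlinarith
  rw [div_mul_eq_mul_div, div_le_iff₀ (by positivity)]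
  nlinarith

lemma cos_quartic {x : ℝ} (h0 : 0 ≤ x) (h1 : x ≤ π) :
    x ^ 2 - (2 - 2 * Real.cos x) ≤ x ^ 4 / 12 := by
  rw [two_sub_two_cos]
  have ht0 : (0:ℝ) ≤ x / 2 := by linarith
  have h2 := my_sin_le ht0
  have h3 := my_sin_ge ht0
  nlinarith [sq_nonneg (x/2), sq_nonneg (Real.sin (x/2))]

/-! ### The key pointwise comparison -/

lemma key1 {θ φ : ℝ} (hθ0 : 0 ≤ θ) (hθ1 : θ ≤ π) (hφ0 : 0 ≤ φ) (hφ1 : φ ≤ π)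
    (hg : 0 < θ ^ 2 + φ ^ 2) :
    |1 / (4 - 2 * Real.cos θ - 2 * Real.cos φ) - 1 / (θ ^ 2 + φ ^ 2)| ≤ π ^ 2 / 48 := by
  have hπ := Real.pi_pos
  set f := 4 - 2 * Real.cos θ - 2 * Real.cos φ with hf
  set g := θ ^ 2 + φ ^ 2 with hgdef
  have hfg : f ≤ g := by
    have h1 := cos_upper (x := θ); have h2 := cos_upper (x := φ); simp [hf, hgdef]; linarith
  have hflow : 4 / π ^ 2 * g ≤ f := by
    have h1 := cos_lower hθ0 hθ1; have h2 := cos_lower hφ0 hφ1; simp [hf, hgdef]; linarith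
  have hfpos : 0 < f := lt_of_lt_of_le (by positivity) hflow
  have hquart : g - f ≤ g ^ 2 / 12 := by
    have h1 := cos_quartic hθ0 hθ1; have h2 := cos_quartic hφ0 hφ1
    have : θ ^ 4 + φ ^ 4 ≤ g ^ 2 := by simp [hgdef]; nlinarith [sq_nonneg (θ*φ)]
    simp only [hf, hgdef] at *; linarith
  have habs : |1 / f - 1 / g| = 1 / f - 1 / g := by
    rw [abs_of_nonneg]
    have := one_div_le_one_div_of_le hfpos hfg
    linarith
  rw [habs]
  rw [div_sub_div _ _ (ne_of_gt hfpos) (ne_of_gt hg), div_le_iff₀ (by positivity)]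
  have h48 : 0 < π ^ 2 / 48 := by positivity
  calc 1 * g - f * 1 = g - f := by ring
  _ ≤ g ^ 2 / 12 := hquart
  _ ≤ π ^ 2 / 48 * (f * g) := by
      have : π ^ 2 / 48 * (f * g) ≥ π ^ 2 / 48 * ((4 / π ^ 2 * g) * g) := by
        apply mul_le_mul_of_nonneg_left _ (le_of_lt h48)
        apply mul_le_mul_of_nonneg_right hflow (by positivity)
      have heq : π ^ 2 / 48 * ((4 / π ^ 2 * g) * g) = g ^ 2 / 12 := by field_simp; ring
      linarith

lemma my_arctan_le_self {x : ℝ} (hx : 0 ≤ x) : Real.arctan x ≤ x := by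
  rcases eq_or_lt_of_le hx with h | h
  · simp [← h]
  · have ha : 0 < Real.arctan x := by
      have := Real.arctan_strictMono h
      simpa [Real.arctan_zero] using this
    have := Real.lt_tan ha (Real.arctan_lt_pi_div_two x)
    rw [Real.tan_arctan] at this
    linarith

lemma my_integral (a : ℝ) (ha : 0 < a) (c d : ℝ) :
    ∫ t in c..d, 1 / (a ^ 2 + t ^ 2) =
      1 / a * Real.arctan (d / a) - 1 / a * Real.arctan (c / a) := by
  have hder : ∀ t : ℝ, HasDerivAt (fun t => 1 / a * Real.arctan (t / a))
      (1 / (a ^ 2 + t ^ 2)) t := by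
    intro t
    have h1 : HasDerivAt (fun t : ℝ => t / a) (1 / a) t := (hasDerivAt_id t).div_const a
    have h2 := (Real.hasDerivAt_arctan (t / a)).comp t h1
    have h3 := h2.const_mul (1 / a)
    refine h3.congr_deriv ?_
    field_simp
  rw [intervalIntegral.integral_eq_sub_of_hasDerivAt (fun t _ => hder t)]
  apply Continuous.intervalIntegrable
  apply Continuous.div continuous_const
  · continuity
  · intro t; positivity

/-! ### One-dimensional sum estimates -/

lemma icc_to_range (n : ℕ) (f : ℕ → ℝ) :
    ∑ b ∈ Icc 1 n, f b = ∑ i ∈ range n, f (1 + i) := by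
  rw [← Finset.Ico_add_one_right_eq_Icc, Finset.sum_Ico_eq_sum_range]
  simp

lemma my_antitone (a : ℝ) (ha : 0 < a) (x : ℝ) (hx : 0 ≤ x) (y : ℕ) :
    AntitoneOn (fun t : ℝ => 1 / (a ^ 2 + t ^ 2)) (Set.Icc x (x + y)) := by
  intro s hs t ht hst
  have hs0 : (0:ℝ) ≤ s := le_trans hx hs.1
  apply one_div_le_one_div_of_le (by positivity)
  nlinarith

lemma Vupper (a n : ℕ) (ha : 1 ≤ a) :
    ∑ b ∈ Icc 1 n, 1 / ((a:ℝ) ^ 2 + (b:ℝ) ^ 2) ≤ π / (2 * a) := by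
  have ha0 : (0:ℝ) < a := by exact_mod_cast ha
  have h := (my_antitone a ha0 0 le_rfl n).sum_le_integral
  simp only [zero_add] at h
  rw [my_integral a ha0 0 n] at h
  have he : ∑ b ∈ Icc 1 n, 1 / ((a:ℝ) ^ 2 + (b:ℝ) ^ 2)
      = ∑ i ∈ range n, 1 / ((a:ℝ) ^ 2 + (((i:ℕ) + 1 : ℕ) : ℝ) ^ 2) := by
    rw [icc_to_range]; apply Finset.sum_congr rfl; intro i _; push_cast; ring_nf
  rw [he]
  refine le_trans h ?_
  rw [zero_div, Real.arctan_zero]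
  have h2 := (Real.arctan_lt_pi_div_two ((n:ℝ) / a)).le
  rw [div_mul_eq_div_div]
  calc 1 / (a:ℝ) * Real.arctan (n / a) - 1 / a * 0
      = Real.arctan ((n:ℝ) / a) / a := by ring
  _ ≤ π / 2 / a := by gcongr

lemma Vlower (a n : ℕ) (ha : 1 ≤ a) (hn : 1 ≤ n) :
    π / (2 * a) - 1 / n - 1 / (a:ℝ) ^ 2 ≤ ∑ b ∈ Icc 1 n, 1 / ((a:ℝ) ^ 2 + (b:ℝ) ^ 2) := by
  have ha0 : (0:ℝ) < a := by exact_mod_cast ha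
  have hn0 : (0:ℝ) < n := by exact_mod_cast hn
  have h := (my_antitone a ha0 1 zero_le_one n).integral_le_sum
  rw [my_integral a ha0 1 (1 + n)] at h
  have he : ∑ b ∈ Icc 1 n, 1 / ((a:ℝ) ^ 2 + (b:ℝ) ^ 2)
      = ∑ i ∈ range n, 1 / ((a:ℝ) ^ 2 + ((1:ℝ) + (i:ℕ)) ^ 2) := by
    rw [icc_to_range]; apply Finset.sum_congr rfl; intro i _; push_cast; ring_nf
  rw [he]
  refine le_trans ?_ h
  have hmono : Real.arctan ((n:ℝ) / a) ≤ Real.arctan ((1 + n) / a) := by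
    apply Real.arctan_strictMono.monotone
    gcongr
    linarith
  have hinv : Real.arctan ((n:ℝ) / a) = π / 2 - Real.arctan ((a:ℝ) / n) := by
    have : (n:ℝ) / a = ((a:ℝ) / n)⁻¹ := by field_simp
    rw [this, Real.arctan_inv_of_pos (by positivity)]
  have h1 : Real.arctan ((a:ℝ) / n) ≤ (a:ℝ) / n := my_arctan_le_self (by positivity)
  have h2 : Real.arctan ((1:ℝ) / a) ≤ 1 / a := my_arctan_le_self (by positivity)
  have key : π / (2 * a) - 1 / n - 1 / (a:ℝ) ^ 2
      ≤ 1 / a * Real.arctan ((1 + n) / a) - 1 / a * Real.arctan (1 / a) := by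
    have e1 : 1 / (a:ℝ) * Real.arctan ((1 + n) / a) ≥ 1 / a * (π / 2 - (a:ℝ)/n) := by
      apply mul_le_mul_of_nonneg_left _ (by positivity)
      rw [hinv] at hmono; linarith
    have e2 : 1 / (a:ℝ) * Real.arctan (1 / a) ≤ 1 / a * (1 / a) := by
      apply mul_le_mul_of_nonneg_left h2 (by positivity)
    have e3 : 1 / (a:ℝ) * (π / 2 - (a:ℝ)/n) - (1/(a:ℝ))*(1/a) = π / (2 * a) - 1 / n - 1/(a:ℝ)^2 := by
      field_simp
    linarith
  refine le_trans key ?_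
  have : ((1:ℝ) + (n:ℕ)) = ((1 + n : ℝ)) := by norm_num
  linarith [le_refl (0:ℝ)]

/-! ### The square lattice sums -/

noncomputable def g2 (a b : ℕ) : ℝ := 1 / ((a:ℝ) ^ 2 + (b:ℝ) ^ 2)
noncomputable def Qsum (p q : ℕ) : ℝ := ∑ a ∈ Icc 1 p, ∑ b ∈ Icc 1 q, g2 a b
noncomputable def Psum (n : ℕ) : ℝ := Qsum n n

lemma g2_nonneg (a b : ℕ) : 0 ≤ g2 a b := by unfold g2; positivity

lemma harmonic_sum (n : ℕ) : ∑ a ∈ Icc 1 n, 1 / (a:ℝ) = (harmonic n : ℝ) := by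
  rw [harmonic_eq_sum_Icc]
  push_cast
  simp [one_div]

lemma sq_inv_sum_le (n : ℕ) (hn : 1 ≤ n) : ∑ a ∈ Icc 1 n, 1 / (a:ℝ) ^ 2 ≤ 2 - 1 / (n:ℝ) := by
  induction n with
  | zero => omega
  | succ m ih =>
    rcases Nat.eq_or_lt_of_le hn with h | h
    · simp [← h]; norm_num
    · have hm : 1 ≤ m := by omega
      rw [Finset.sum_Icc_succ_top (by omega)]
      have h2 : 1 / ((m:ℝ)+1) ^ 2 ≤ 1 / (m:ℝ) - 1 / ((m:ℝ)+1) := by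
        have hm0 : (0:ℝ) < m := by exact_mod_cast hm
        rw [div_sub_div _ _ (ne_of_gt hm0) (by positivity)]
        rw [div_le_div_iff₀ (by positivity) (by positivity)]
        ring_nf
        nlinarith
      have := ih hm
      push_cast
      push_cast at this
      linarith

lemma sq_le_two (k : ℕ) : ∑ a ∈ Icc 1 k, 1 / (a:ℝ) ^ 2 ≤ 2 := by
  rcases Nat.eq_zero_or_pos k with h | h
  · simp [h]
  · have := sq_inv_sum_le k h
    have h2 : (0:ℝ) < 1 / k := by positivity
    linarith

lemma Psum_upper (n : ℕ) (hn : 1 ≤ n) : Psum n ≤ π / 2 * (1 + Real.log n) := by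
  have hP : Psum n = ∑ a ∈ Icc 1 n, ∑ b ∈ Icc 1 n, 1 / ((a:ℝ) ^ 2 + (b:ℝ) ^ 2) := rfl
  rw [hP]
  have h1 : ∑ a ∈ Icc 1 n, ∑ b ∈ Icc 1 n, 1 / ((a:ℝ) ^ 2 + (b:ℝ) ^ 2)
      ≤ ∑ a ∈ Icc 1 n, π / (2 * a) := by
    apply Finset.sum_le_sum
    intro a ha
    exact Vupper a n (Finset.mem_Icc.mp ha).1
  have h2 : ∑ a ∈ Icc 1 n, π / (2 * (a:ℝ)) = π / 2 * ∑ a ∈ Icc 1 n, 1 / (a:ℝ) := by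
    rw [Finset.mul_sum]
    apply Finset.sum_congr rfl
    intro a _
    rw [mul_one_div, div_div]
  have h3 : (harmonic n : ℝ) ≤ 1 + Real.log n := harmonic_le_one_add_log n
  have hπ := Real.pi_pos
  rw [h2, harmonic_sum] at h1
  calc ∑ a ∈ Icc 1 n, ∑ b ∈ Icc 1 n, 1 / ((a:ℝ) ^ 2 + (b:ℝ) ^ 2)
      ≤ π / 2 * (harmonic n : ℝ) := h1
  _ ≤ π / 2 * (1 + Real.log n) := by gcongr

lemma Psum_lower (n : ℕ) (hn : 1 ≤ n) : π / 2 * Real.log n - 3 ≤ Psum n := by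
  have hP : Psum n = ∑ a ∈ Icc 1 n, ∑ b ∈ Icc 1 n, 1 / ((a:ℝ) ^ 2 + (b:ℝ) ^ 2) := rfl
  rw [hP]
  have h1 : ∑ a ∈ Icc 1 n, (π / (2 * (a:ℝ)) - 1 / n - 1 / (a:ℝ) ^ 2)
      ≤ ∑ a ∈ Icc 1 n, ∑ b ∈ Icc 1 n, 1 / ((a:ℝ) ^ 2 + (b:ℝ) ^ 2) := by
    apply Finset.sum_le_sum
    intro a ha
    exact Vlower a n (Finset.mem_Icc.mp ha).1 hn
  have hn0 : (0:ℝ) < n := by exact_mod_cast hn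
  rw [Finset.sum_sub_distrib, Finset.sum_sub_distrib] at h1
  have h2 : ∑ a ∈ Icc 1 n, π / (2 * (a:ℝ)) = π / 2 * (harmonic n : ℝ) := by
    rw [← harmonic_sum, Finset.mul_sum]
    apply Finset.sum_congr rfl
    intro a _
    rw [mul_one_div, div_div]
  have h3 : ∑ _a ∈ Icc 1 n, (1:ℝ) / n = 1 := by
    rw [Finset.sum_const, Nat.card_Icc]
    simp
    field_simp
  have h4 : ∑ a ∈ Icc 1 n, 1 / (a:ℝ) ^ 2 ≤ 2 := sq_le_two n
  have h5 : Real.log n ≤ (harmonic n : ℝ) := by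
    have := log_add_one_le_harmonic n
    have hmono : Real.log n ≤ Real.log (n+1) := by
      apply Real.log_le_log (by positivity)
      push_cast; linarith
    push_cast at this
    linarith
  have hπ := Real.pi_pos
  have h6 : π / 2 * Real.log n ≤ π / 2 * (harmonic n : ℝ) := by gcongr
  linarith

/-! ### Reindexing the torus sums -/

lemma reindex1d (M : ℕ) (hM : 2 ≤ M) (g : ℕ → ℝ) :
    ∑ i ∈ Ico 1 M, g (min i (M - i)) =
      ∑ i ∈ Icc 1 (M/2), g i + ∑ i ∈ Icc 1 (M - 1 - M/2), g i := by
  set m := M / 2 with hm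
  have hsplit : ∑ i ∈ Ico 1 M, g (min i (M - i)) =
      ∑ i ∈ Ico 1 (m+1), g (min i (M - i)) + ∑ i ∈ Ico (m+1) M, g (min i (M - i)) := by
    rw [Finset.sum_Ico_consecutive]
    · omega
    · omega
  rw [hsplit]
  congr 1
  · rw [Finset.Ico_add_one_right_eq_Icc]
    apply Finset.sum_congr rfl
    intro i hi
    rw [Finset.mem_Icc] at hi
    congr 1
    omega
  · rw [show ∑ i ∈ Ico (m+1) M, g (min i (M - i)) = ∑ i ∈ Ico (m+1) M, g (M - i) from
      Finset.sum_congr rfl (fun i hi => by rw [Finset.mem_Ico] at hi; congr 1; omega)]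
    apply Finset.sum_nbij' (fun i => M - i) (fun k => M - k)
    · intro i hi; rw [Finset.mem_Ico] at hi; rw [Finset.mem_Icc]; omega
    · intro k hk; rw [Finset.mem_Icc] at hk; rw [Finset.mem_Ico]; omega
    · intro i hi; rw [Finset.mem_Ico] at hi; omega
    · intro k hk; rw [Finset.mem_Icc] at hk; omega
    · intro i _; rfl

lemma Q_mono {p q P Q : ℕ} (hp : p ≤ P) (hq : q ≤ Q) : Qsum p q ≤ Qsum P Q := by
  unfold Qsum
  apply le_trans (Finset.sum_le_sum (fun a _ =>
    Finset.sum_le_sum_of_subset_of_nonneg (Finset.Icc_subset_Icc_right hq)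
      (fun b _ _ => g2_nonneg a b)))
  apply Finset.sum_le_sum_of_subset_of_nonneg (Finset.Icc_subset_Icc_right hp)
  intro a _ _
  exact Finset.sum_nonneg (fun b _ => g2_nonneg a b)

lemma Psum_sub_Q (m : ℕ) (hm : 1 ≤ m) : Psum m - 3 ≤ Qsum (m-1) (m-1) := by
  have hmm : m - 1 + 1 = m := by omega
  have hg2m : ∀ a : ℕ, g2 a m ≤ 1 / (m:ℝ)^2 := by
    intro a
    unfold g2
    apply one_div_le_one_div_of_le (by positivity)
    nlinarith [sq_nonneg ((a:ℕ):ℝ), Nat.cast_nonneg (α := ℝ) a]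
  have hg2m' : ∀ b : ℕ, g2 m b ≤ 1 / (m:ℝ)^2 := by
    intro b
    unfold g2
    apply one_div_le_one_div_of_le (by positivity)
    nlinarith [sq_nonneg ((b:ℕ):ℝ)]
  have hm0 : (0:ℝ) < m := by exact_mod_cast hm
  have hm1 : (1:ℝ) ≤ m := by exact_mod_cast hm
  have e1 : Psum m = Qsum (m-1) (m-1) + ∑ a ∈ Icc 1 (m-1), g2 a m
      + (∑ b ∈ Icc 1 (m-1), g2 m b + g2 m m) := by
    unfold Psum Qsum
    conv_lhs => rw [← hmm]
    rw [Finset.sum_Icc_succ_top (by omega)]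
    rw [hmm]
    congr 1
    · rw [← Finset.sum_add_distrib]
      apply Finset.sum_congr rfl
      intro a _
      conv_lhs => rw [← hmm]
      rw [Finset.sum_Icc_succ_top (by omega), hmm]
    · conv_lhs => rw [← hmm]
      rw [Finset.sum_Icc_succ_top (by omega), hmm]
  have c1 : ∑ a ∈ Icc 1 (m-1), g2 a m ≤ 1 := by
    calc ∑ a ∈ Icc 1 (m-1), g2 a m ≤ ∑ a ∈ Icc 1 (m-1), 1/(m:ℝ)^2 :=
      Finset.sum_le_sum (fun a _ => hg2m a)
    _ = (m-1 : ℕ) * (1/(m:ℝ)^2) := by rw [Finset.sum_const, Nat.card_Icc]; simp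
    _ ≤ (m:ℝ) * (1/(m:ℝ)^2) := by
        gcongr
        exact_mod_cast Nat.sub_le m 1
    _ ≤ 1 := by rw [mul_one_div]; rw [div_le_one (by positivity)]; nlinarith [hm1]
  have c2 : ∑ b ∈ Icc 1 (m-1), g2 m b ≤ 1 := by
    calc ∑ b ∈ Icc 1 (m-1), g2 m b ≤ ∑ b ∈ Icc 1 (m-1), 1/(m:ℝ)^2 :=
      Finset.sum_le_sum (fun b _ => hg2m' b)
    _ = (m-1 : ℕ) * (1/(m:ℝ)^2) := by rw [Finset.sum_const, Nat.card_Icc]; simp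
    _ ≤ (m:ℝ) * (1/(m:ℝ)^2) := by
        gcongr
        exact_mod_cast Nat.sub_le m 1
    _ ≤ 1 := by rw [mul_one_div]; rw [div_le_one (by positivity)]; nlinarith [hm1]
  have c3 : g2 m m ≤ 0 + 1 := by
    have := hg2m m
    have : 1/(m:ℝ)^2 ≤ 1 := by
      rw [div_le_one (by positivity)]; nlinarith [hm1]
    have h0 := hg2m m
    linarith
  linarith

/-! ### The discrete torus sum -/

noncomputable def TT (M : ℕ) : ℝ := ∑ i ∈ range M, ∑ j ∈ range M,
  if i = 0 ∧ j = 0 then 0 else g2 (min i (M-i)) (min j (M-j))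

lemma TT_decomp (M : ℕ) (hM : 2 ≤ M) :
    TT M = (∑ j ∈ Ico 1 M, g2 0 (min j (M-j)))
      + ((∑ i ∈ Ico 1 M, g2 (min i (M-i)) 0)
      + ∑ i ∈ Ico 1 M, ∑ j ∈ Ico 1 M, g2 (min i (M-i)) (min j (M-j))) := by
  unfold TT
  rw [Finset.range_eq_Ico, Finset.sum_eq_sum_Ico_succ_bot (by omega : 0 < M)]
  congr 1
  · rw [Finset.sum_eq_sum_Ico_succ_bot (by omega : 0 < M)]
    simp only [and_true, true_and]
    rw [if_pos trivial, zero_add]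
    apply Finset.sum_congr rfl
    intro j hj
    rw [Finset.mem_Ico] at hj
    rw [if_neg (by omega)]
    congr 1
  · rw [← Finset.sum_add_distrib]
    apply Finset.sum_congr rfl
    intro i hi
    rw [Finset.mem_Ico] at hi
    rw [Finset.sum_eq_sum_Ico_succ_bot (by omega : 0 < M)]
    congr 1
    · rw [if_neg (by omega)]
      congr 1
    · apply Finset.sum_congr rfl
      intro j hj
      rw [Finset.mem_Ico] at hj
      rw [if_neg (by omega)]

lemma TT_bounds (M : ℕ) (hM : 4 ≤ M) :
    4 * Psum (M/2) - 12 ≤ TT M ∧ TT M ≤ 4 * Psum (M/2) + 8 := by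
  set m := M / 2 with hm
  set m' := M - 1 - M / 2 with hm'
  have hM2 : 2 ≤ M := by omega
  have hmm : 2 ≤ m := by omega
  have hm'1 : m - 1 ≤ m' := by omega
  have hm'2 : m' ≤ m := by omega
  rw [TT_decomp M hM2]
  have hrow : ∑ j ∈ Ico 1 M, g2 0 (min j (M-j)) ≤ 4 := by
    rw [reindex1d M hM2 (fun b => g2 0 b)]
    have e : ∀ k : ℕ, ∑ b ∈ Icc 1 k, g2 0 b = ∑ b ∈ Icc 1 k, 1 / (b:ℝ)^2 := by
      intro k; apply Finset.sum_congr rfl; intro b _; simp [g2]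
    rw [e m, e m']
    linarith [sq_le_two m, sq_le_two m']
  have hrow0 : 0 ≤ ∑ j ∈ Ico 1 M, g2 0 (min j (M-j)) :=
    Finset.sum_nonneg (fun j _ => g2_nonneg _ _)
  have hcol : ∑ i ∈ Ico 1 M, g2 (min i (M-i)) 0 ≤ 4 := by
    rw [reindex1d M hM2 (fun a => g2 a 0)]
    have e : ∀ k : ℕ, ∑ b ∈ Icc 1 k, g2 b 0 = ∑ b ∈ Icc 1 k, 1 / (b:ℝ)^2 := by
      intro k; apply Finset.sum_congr rfl; intro b _; simp [g2]
    rw [e m, e m']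
    linarith [sq_le_two m, sq_le_two m']
  have hcol0 : 0 ≤ ∑ i ∈ Ico 1 M, g2 (min i (M-i)) 0 :=
    Finset.sum_nonneg (fun i _ => g2_nonneg _ _)
  have hcore : ∑ i ∈ Ico 1 M, ∑ j ∈ Ico 1 M, g2 (min i (M-i)) (min j (M-j))
      = Qsum m m + Qsum m m' + (Qsum m' m + Qsum m' m') := by
    rw [reindex1d M hM2 (fun a => ∑ j ∈ Ico 1 M, g2 a (min j (M-j)))]
    have e : ∀ a : ℕ, ∑ j ∈ Ico 1 M, g2 a (min j (M-j))
        = ∑ b ∈ Icc 1 m, g2 a b + ∑ b ∈ Icc 1 m', g2 a b := by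
      intro a
      exact reindex1d M hM2 (fun b => g2 a b)
    congr 1
    · rw [Finset.sum_congr rfl (fun a _ => e a), Finset.sum_add_distrib]
      rfl
    · rw [Finset.sum_congr rfl (fun a _ => e a), Finset.sum_add_distrib]
      rfl
  rw [hcore]
  have hQle : ∀ p q, p ≤ m → q ≤ m → Qsum p q ≤ Psum m := fun p q hp hq => Q_mono hp hq
  have hQge : ∀ p q, m - 1 ≤ p → m - 1 ≤ q → Psum m - 3 ≤ Qsum p q := by
    intro p q hp hq
    exact le_trans (Psum_sub_Q m (by omega)) (Q_mono hp hq)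
  constructor
  · have := hQge m m (by omega) (by omega)
    have := hQge m m' (by omega) hm'1
    have := hQge m' m hm'1 (by omega)
    have := hQge m' m' hm'1 hm'1
    linarith
  · have := hQle m m le_rfl le_rfl
    have := hQle m m' le_rfl hm'2
    have := hQle m' m hm'2 le_rfl
    have := hQle m' m' hm'2 hm'2
    linarith

/-! ### Comparing `Rave2` with the lattice sum -/

lemma cos_min (M i : ℕ) (hM : 1 ≤ M) (hi : i < M) :
    Real.cos (2*π*i/M) = Real.cos (2*π*(min i (M-i) : ℕ)/M) := by
  rcases le_or_gt i (M - i) with h | h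
  · rw [min_eq_left h]
  · rw [min_eq_right h.le]
    have hM0 : (0:ℝ) < M := by exact_mod_cast hM
    have hc : ((M - i : ℕ) : ℝ) = (M : ℝ) - i := by
      have : i ≤ M := hi.le
      push_cast [this]
      ring
    rw [hc]
    have he : 2*π*((M:ℝ) - i)/M = 2*π - 2*π*i/M := by
      field_simp
    rw [he, Real.cos_sub, Real.cos_two_pi, Real.sin_two_pi]
    ring

lemma perterm (M i j : ℕ) (hM : 2 ≤ M) (hi : i < M) (hj : j < M) :
    |(1/((M:ℝ)*M)) * (if i = 0 ∧ j = 0 then 0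
        else 1 / (4 - 2 * Real.cos (2 * π * i / M) - 2 * Real.cos (2 * π * j / M)))
      - (1/(4*π^2)) * (if i = 0 ∧ j = 0 then 0 else g2 (min i (M-i)) (min j (M-j)))|
      ≤ 1/((M:ℝ)*M) * (π^2/48) := by
  have hπ := Real.pi_pos
  have hM0 : (0:ℝ) < M := by positivity
  by_cases h0 : i = 0 ∧ j = 0
  · rw [if_pos h0, if_pos h0]
    simp
    positivity
  · rw [if_neg h0, if_neg h0]
    set a := min i (M - i) with ha
    set b := min j (M - j) with hb
    set θ := 2*π*(a:ℝ)/M with hθ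
    set φ := 2*π*(b:ℝ)/M with hφ
    have hca : Real.cos (2*π*i/M) = Real.cos θ := cos_min M i (by omega) hi
    have hcb : Real.cos (2*π*j/M) = Real.cos φ := cos_min M j (by omega) hj
    have h2a : 2 * a ≤ M := by omega
    have h2b : 2 * b ≤ M := by omega
    have hθ0 : 0 ≤ θ := by positivity
    have hφ0 : 0 ≤ φ := by positivity
    have hθ1 : θ ≤ π := by
      rw [hθ, div_le_iff₀ hM0]
      have : (2*(a:ℝ)) ≤ M := by exact_mod_cast h2a
      nlinarith
    have hφ1 : φ ≤ π := by
      rw [hφ, div_le_iff₀ hM0]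
      have : (2*(b:ℝ)) ≤ M := by exact_mod_cast h2b
      nlinarith
    have hab : 1 ≤ a + b := by omega
    have hg : 0 < θ^2 + φ^2 := by
      rcases Nat.eq_zero_or_pos a with h | h
      · have hb1 : 1 ≤ b := by omega
        have : 0 < φ := by
          rw [hφ]
          have : (0:ℝ) < b := by exact_mod_cast hb1
          positivity
        positivity
      · have : 0 < θ := by
          rw [hθ]
          have : (0:ℝ) < a := by exact_mod_cast h
          positivity
        positivity
    have hk := key1 hθ0 hθ1 hφ0 hφ1 hg
    have hiden : (1/(4*π^2)) * g2 a b = (1/((M:ℝ)*M)) * (1/(θ^2+φ^2)) := by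
      rw [g2]
      have h1 : θ^2 + φ^2 = (2*π/M)^2 * ((a:ℝ)^2+(b:ℝ)^2) := by rw [hθ, hφ]; field_simp
      have habpos : 0 < (a:ℝ)^2 + (b:ℝ)^2 := by
        nlinarith [hg, sq_nonneg ((a:ℝ)), sq_nonneg ((b:ℝ)), sq_nonneg (2*π/(M:ℝ))]
      rw [h1, one_div_mul_one_div, one_div_mul_one_div]
      rw [div_eq_div_iff (by positivity) (by positivity), one_mul, one_mul]
      field_simp
      ring
    rw [hca, hcb]
    calc |1/((M:ℝ)*M) * (1 / (4 - 2 * Real.cos θ - 2 * Real.cos φ)) - 1/(4*π^2) * g2 a b|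
        = |1/((M:ℝ)*M)| * |1 / (4 - 2 * Real.cos θ - 2 * Real.cos φ) - 1/(θ^2+φ^2)| := by
          rw [hiden, ← mul_sub, abs_mul]
    _ ≤ 1/((M:ℝ)*M) * (π^2/48) := by
          rw [abs_of_nonneg (by positivity : (0:ℝ) ≤ 1/((M:ℝ)*M))]
          gcongr

lemma Rave_close (M : ℕ) (hM : 2 ≤ M) :
    |Rave2 M M - 1/(4*π^2) * TT M| ≤ π^2/48 := by
  have hπ := Real.pi_pos
  have hM0 : (0:ℝ) < M := by positivity
  have e : Rave2 M M - 1/(4*π^2) * TT M = ∑ i ∈ range M, ∑ j ∈ range M,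
      ((1/((M:ℝ)*M)) * (if i = 0 ∧ j = 0 then 0
        else 1 / (4 - 2 * Real.cos (2 * π * i / M) - 2 * Real.cos (2 * π * j / M)))
      - (1/(4*π^2)) * (if i = 0 ∧ j = 0 then 0 else g2 (min i (M-i)) (min j (M-j)))) := by
    unfold Rave2 TT
    rw [Finset.mul_sum, Finset.mul_sum, ← Finset.sum_sub_distrib]
    apply Finset.sum_congr rfl
    intro i _
    rw [Finset.mul_sum, Finset.mul_sum, ← Finset.sum_sub_distrib]
  rw [e]
  calc |∑ i ∈ range M, ∑ j ∈ range M, _| ≤ ∑ i ∈ range M, ∑ j ∈ range M,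
      |(1/((M:ℝ)*M)) * (if i = 0 ∧ j = 0 then 0
        else 1 / (4 - 2 * Real.cos (2 * π * i / M) - 2 * Real.cos (2 * π * j / M)))
      - (1/(4*π^2)) * (if i = 0 ∧ j = 0 then 0 else g2 (min i (M-i)) (min j (M-j)))| := by
        apply le_trans (Finset.abs_sum_le_sum_abs _ _)
        apply Finset.sum_le_sum
        intro i _
        exact Finset.abs_sum_le_sum_abs _ _
  _ ≤ ∑ _i ∈ range M, ∑ _j ∈ range M, 1/((M:ℝ)*M) * (π^2/48) := by
        apply Finset.sum_le_sum
        intro i hi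
        apply Finset.sum_le_sum
        intro j hj
        exact perterm M i j hM (Finset.mem_range.mp hi) (Finset.mem_range.mp hj)
  _ = π^2/48 := by
        rw [Finset.sum_const, Finset.sum_const, Finset.card_range]
        simp only [nsmul_eq_mul]
        field_simp

/-! ### The main quantitative bound -/

set_option maxHeartbeats 1000000 in
lemma main_bound (M : ℕ) (hM : 4 ≤ M) :
    |Rave2 M M - 1/(2*π) * Real.log M| ≤ 5 := by
  have hπ := Real.pi_pos
  have hπ3 := Real.pi_gt_three
  have hπ4 := Real.pi_le_four
  set m := M / 2 with hm
  have hm2 : 2 ≤ m := by omega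
  have hm0 : (0:ℝ) < m := by
    have : (2:ℝ) ≤ m := by exact_mod_cast hm2
    linarith
  have hM0 : (0:ℝ) < M := by positivity
  set L := Real.log m with hL
  set LM := Real.log M with hLM
  have hL0 : 0 ≤ L := by
    apply Real.log_nonneg
    have : (2:ℝ) ≤ m := by exact_mod_cast hm2
    linarith
  have hLle : L ≤ LM := Real.log_le_log hm0 (by exact_mod_cast Nat.div_le_self M 2)
  have hMle : (M:ℝ) ≤ 4 * m := by
    have : M ≤ 4 * m := by omega
    exact_mod_cast this
  have hLM4 : LM ≤ Real.log 4 + L := by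
    rw [hLM, hL]
    calc Real.log M ≤ Real.log (4 * m) := Real.log_le_log hM0 hMle
    _ = Real.log 4 + Real.log m := Real.log_mul (by norm_num) (ne_of_gt hm0)
  have hl4 : Real.log 4 ≤ 3 := by
    have := Real.log_le_sub_one_of_pos (by norm_num : (0:ℝ) < 4)
    linarith
  have h1 := Rave_close M (by omega)
  have h2 := TT_bounds M hM
  have h3u := Psum_upper m (by omega)
  have h3l := Psum_lower m (by omega)
  have hc : (0:ℝ) < 1/(4*π^2) := by positivity
  have hTl : 4 * (π/2 * L - 3) - 12 ≤ TT M := by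
    refine le_trans ?_ h2.1
    linarith
  have hTu : TT M ≤ 4 * (π/2 * (1 + L)) + 8 := by
    refine le_trans h2.2 ?_
    linarith
  have hRl := mul_le_mul_of_nonneg_left hTl hc.le
  have hRu := mul_le_mul_of_nonneg_left hTu hc.le
  have e1 : 1/(4*π^2) * (4*(π/2 * L - 3) - 12) = 1/(2*π) * L - 6/π^2 := by
    field_simp
    ring
  have e2 : 1/(4*π^2) * (4*(π/2 * (1 + L)) + 8) = 1/(2*π) * (1 + L) + 2/π^2 := by
    field_simp
    ring
  rw [e1] at hRl
  rw [e2] at hRu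
  have habs := abs_le.mp h1
  have n1 : 1/(2*π) ≤ 1/6 := by
    rw [div_le_div_iff₀ (by linarith) (by norm_num)]
    linarith
  have n2 : (6:ℝ)/π^2 ≤ 6/9 := by
    rw [div_le_div_iff₀ (by positivity) (by norm_num)]
    nlinarith [hπ3, hπ]
  have n3 : (2:ℝ)/π^2 ≤ 2/9 := by
    rw [div_le_div_iff₀ (by positivity) (by norm_num)]
    nlinarith [hπ3, hπ]
  have n4 : π^2/48 ≤ 16/48 := by
    have h16 : π^2 ≤ 16 := by nlinarith [hπ4, hπ]
    linarith
  have hgap : 1/(2*π) * (LM - L) ≤ 1/6 * 3 := by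
    have hgap1 : LM - L ≤ 3 := by linarith
    have h0 : 0 ≤ LM - L := by linarith
    calc 1/(2*π) * (LM - L) ≤ 1/6 * (LM - L) := by
          apply mul_le_mul_of_nonneg_right n1 h0
    _ ≤ 1/6 * 3 := by linarith
  have hgap0 : 0 ≤ 1/(2*π) * (LM - L) := by
    apply mul_nonneg (by positivity)
    linarith
  have e3 : 1/(2*π) * (1+L) = 1/(2*π) + 1/(2*π)*L := by ring
  have e4 : 1/(2*π)*L - 1/(2*π)*LM = -(1/(2*π)*(LM-L)) := by ring
  rw [abs_le]
  constructor
  · linarith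
  · linarith


theorem torus2_square_asymptotic :
    Filter.Tendsto (fun M : ℕ => Rave2 M M / Real.log M) Filter.atTop
      (nhds (1 / (2 * Real.pi))) := by
  rw [← tendsto_sub_nhds_zero_iff]
  have hg : Filter.Tendsto (fun M : ℕ => 5 / Real.log M) Filter.atTop (nhds 0) :=
    Filter.Tendsto.div_atTop tendsto_const_nhds
      (Real.tendsto_log_atTop.comp tendsto_natCast_atTop_atTop)
  apply squeeze_zero_norm' _ hg
  filter_upwards [Filter.eventually_ge_atTop 4] with M hM
  have hM1 : (1:ℝ) < M := by
    have : (4:ℝ) ≤ M := by exact_mod_cast hM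
    linarith
  have hlog : 0 < Real.log M := Real.log_pos hM1
  have hb := main_bound M hM
  rw [Real.norm_eq_abs]
  have e : Rave2 M M / Real.log M - 1/(2*π) = (Rave2 M M - 1/(2*π) * Real.log M) / Real.log M := by
    field_simp
  rw [show (1:ℝ) / (2 * π) = 1/(2*π) from rfl, e, abs_div, abs_of_pos hlog]
  gcongr
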